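/- Let K = ℂ and let V ⊆ K[x,y,z]_2 be the 3-dimensional space spanned by x^2 + 2jyz, y^2 + 2jxz, z^2 + 2jxy with j ∈ ℂ, j^3 ∉ {0, 1, -1/8}. Then the quotient K[x,y,z]/(V) is Artinian with Hilbert series 1 + 3x + 3x^2 + x^3, i.e., V generates a complete intersection ideal. -/

import Mathlib

open MvPolynomial

noncomputable def piece {K : Type*} [Field K] {n : ℕ} (I : Ideal (MvPolynomial (Fin n) K))
    (i : ℕ) : Submodule K (MvPolynomial (Fin n) K ⧸ I) :=
  (MvPolynomial.homogeneousSubmodule (Fin n) K i).map (Ideal.Quotient.mkₐ K I).toLinearMap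

/-- Variables: `X 0 = x`, `X 1 = y`, `X 2 = z`; the Hesse net
`(x² + 2jyz, y² + 2jxz, z² + 2jxy)`. -/
noncomputable def hesseIdeal (j : ℂ) : Ideal (MvPolynomial (Fin 3) ℂ) :=
  Ideal.span ({X 0 ^ 2 + C (2 * j) * (X 1 * X 2), X 1 ^ 2 + C (2 * j) * (X 0 * X 2),
    X 2 ^ 2 + C (2 * j) * (X 0 * X 1)} : Set (MvPolynomial (Fin 3) ℂ))

section Aux

open Finsupp

noncomputable section

abbrev R3 := MvPolynomial (Fin 3) ℂ

def E (a b c : ℕ) : Fin 3 →₀ ℕ := Finsupp.single 0 a + Finsupp.single 1 b + Finsupp.single 2 c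

lemma E_apply0 (a b c : ℕ) : E a b c 0 = a := by simp [E, Finsupp.single_apply]
lemma E_apply1 (a b c : ℕ) : E a b c 1 = b := by simp [E, Finsupp.single_apply]
lemma E_apply2 (a b c : ℕ) : E a b c 2 = c := by simp [E, Finsupp.single_apply]

lemma E_self (m : Fin 3 →₀ ℕ) : m = E (m 0) (m 1) (m 2) := by
  ext i; fin_cases i <;> simp [E, Finsupp.single_apply]

lemma E_eq_iff {a b c a' b' c' : ℕ} : E a b c = E a' b' c' ↔ a = a' ∧ b = b' ∧ c = c' := by
  constructor
  · intro h
    exact ⟨by rw [← E_apply0 a b c, h, E_apply0], by rw [← E_apply1 a b c, h, E_apply1],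
      by rw [← E_apply2 a b c, h, E_apply2]⟩
  · rintro ⟨rfl, rfl, rfl⟩; rfl

lemma E_le_iff {a b c a' b' c' : ℕ} : E a b c ≤ E a' b' c' ↔ a ≤ a' ∧ b ≤ b' ∧ c ≤ c' := by
  rw [Finsupp.le_def]
  constructor
  · intro h
    exact ⟨by simpa [E_apply0] using h 0, by simpa [E_apply1] using h 1,
      by simpa [E_apply2] using h 2⟩
  · rintro ⟨h1, h2, h3⟩ i
    fin_cases i <;> simpa [E_apply0, E_apply1, E_apply2]

lemma E_sub (a b c a' b' c' : ℕ) : E a b c - E a' b' c' = E (a-a') (b-b') (c-c') := by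
  ext i; fin_cases i <;>
    simp [Finsupp.tsub_apply, E_apply0, E_apply1, E_apply2]

lemma E_le_self (a b c : ℕ) (m : Fin 3 →₀ ℕ) (h0 : a ≤ m 0) (h1 : b ≤ m 1) (h2 : c ≤ m 2) :
    E a b c ≤ m := by
  rw [Finsupp.le_def]; intro i; fin_cases i <;> simpa [E_apply0, E_apply1, E_apply2]

lemma monomial_E (a b c : ℕ) (r : ℂ) :
    (monomial (E a b c) r : R3) = C r * X 0 ^ a * X 1 ^ b * X 2 ^ c := by
  rw [E, X_pow_eq_monomial, X_pow_eq_monomial, X_pow_eq_monomial,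
    show (C r : R3) = monomial 0 r from rfl, monomial_mul, monomial_mul, monomial_mul]
  simp

lemma weight_one (m : Fin 3 →₀ ℕ) : (Finsupp.weight (1 : Fin 3 → ℕ)) m = m 0 + m 1 + m 2 := by
  simp [Finsupp.weight_apply, Finsupp.sum_fintype, Fin.sum_univ_three]

lemma mdeg (m : Fin 3 →₀ ℕ) : m.degree = m 0 + m 1 + m 2 := by
  rw [Finsupp.degree_eq_weight_one]; exact weight_one m

/-- The Macaulay inverse system functional certifying nonmembership in the Hesse ideal. -/
def Phi (j : ℂ) (p : R3) : ℂ :=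
  coeff (E 1 1 1) p - 2*j*(coeff (E 3 0 0) p + coeff (E 0 3 0) p + coeff (E 0 0 3) p)

lemma Phi_add (j : ℂ) (p q : R3) : Phi j (p + q) = Phi j p + Phi j q := by
  simp [Phi, coeff_add]; ring

lemma Phi_monomial (j : ℂ) (a b c : ℕ) (r : ℂ) :
    Phi j (monomial (E a b c) r) =
      (if a = 1 ∧ b = 1 ∧ c = 1 then r else 0)
      - 2*j*((if a = 3 ∧ b = 0 ∧ c = 0 then r else 0)
        + (if a = 0 ∧ b = 3 ∧ c = 0 then r else 0)
        + (if a = 0 ∧ b = 0 ∧ c = 3 then r else 0)) := by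
  simp only [Phi, coeff_monomial, E_eq_iff]

def g0 (j : ℂ) : R3 := X 0 ^ 2 + C (2 * j) * (X 1 * X 2)
def g1 (j : ℂ) : R3 := X 1 ^ 2 + C (2 * j) * (X 0 * X 2)
def g2 (j : ℂ) : R3 := X 2 ^ 2 + C (2 * j) * (X 0 * X 1)

lemma g0_eq (j : ℂ) : g0 j = monomial (E 2 0 0) 1 + monomial (E 0 1 1) (2*j) := by
  rw [g0, monomial_E, monomial_E]; simp; ring
lemma g1_eq (j : ℂ) : g1 j = monomial (E 0 2 0) 1 + monomial (E 1 0 1) (2*j) := by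
  rw [g1, monomial_E, monomial_E]; simp; ring
lemma g2_eq (j : ℂ) : g2 j = monomial (E 0 0 2) 1 + monomial (E 1 1 0) (2*j) := by
  rw [g2, monomial_E, monomial_E]; simp; ring

lemma Phi_mul_g0 (j : ℂ) (p : R3) : Phi j (p * g0 j) = 0 := by
  rw [g0_eq, mul_add, Phi_add]
  simp only [Phi, coeff_mul_monomial', E_le_iff, E_sub]
  norm_num; ring
lemma Phi_mul_g1 (j : ℂ) (p : R3) : Phi j (p * g1 j) = 0 := by
  rw [g1_eq, mul_add, Phi_add]
  simp only [Phi, coeff_mul_monomial', E_le_iff, E_sub]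
  norm_num; ring
lemma Phi_mul_g2 (j : ℂ) (p : R3) : Phi j (p * g2 j) = 0 := by
  rw [g2_eq, mul_add, Phi_add]
  simp only [Phi, coeff_mul_monomial', E_le_iff, E_sub]
  norm_num; ring

end
end Aux

section Aux2
noncomputable section

lemma hesseIdeal_eq (j : ℂ) : hesseIdeal j = Ideal.span {g0 j, g1 j, g2 j} := rfl

lemma Phi_ideal {j : ℂ} {p : R3} (hp : p ∈ hesseIdeal j) : Phi j p = 0 := by
  rw [hesseIdeal_eq] at hp
  have : ∀ r : R3, Phi j (r * p) = 0 := by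
    refine Submodule.span_induction (p := fun x _ => ∀ r : R3, Phi j (r * x) = 0)
      ?_ ?_ ?_ ?_ hp
    · rintro x (rfl | rfl | rfl) r
      · exact Phi_mul_g0 j r
      · exact Phi_mul_g1 j r
      · exact Phi_mul_g2 j r
    · intro r; simp [Phi]
    · intro x y _ _ hx hy r; rw [mul_add, Phi_add, hx, hy, add_zero]
    · intro a x _ hx r
      rw [smul_eq_mul, ← mul_assoc, hx]
  simpa using this 1

lemma C2j (j : ℂ) : (C (2 * j) : R3) = 2 * C j := by
  rw [C_mul, map_ofNat]

lemma g0_mem (j : ℂ) : g0 j ∈ hesseIdeal j := Ideal.subset_span (by left; rfl)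
lemma g1_mem (j : ℂ) : g1 j ∈ hesseIdeal j := Ideal.subset_span (by right; left; rfl)
lemma g2_mem (j : ℂ) : g2 j ∈ hesseIdeal j := Ideal.subset_span (by right; right; rfl)

lemma unit_ne {j : ℂ} (hj2 : j ^ 3 ≠ -1/8) : (1 + 8 * j ^ 3 : ℂ) ≠ 0 := by
  intro h; exact hj2 (by linear_combination h / 8)

lemma mem_of_C_mul {I : Ideal R3} {u : ℂ} (hu : u ≠ 0) {p : R3} (h : C u * p ∈ I) : p ∈ I := by
  have h2 := I.mul_mem_left (C u⁻¹) h
  rwa [← mul_assoc, ← C_mul, inv_mul_cancel₀ hu, C_1, one_mul] at h2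

lemma gen_sum_mem {j : ℂ} {p q r : R3} : p * g0 j + q * g1 j + r * g2 j ∈ hesseIdeal j :=
  add_mem (add_mem (Ideal.mul_mem_left _ _ (g0_mem j)) (Ideal.mul_mem_left _ _ (g1_mem j)))
    (Ideal.mul_mem_left _ _ (g2_mem j))

lemma C_unit_eq {j : ℂ} : (C (1 + 8 * j ^ 3) : R3) = 1 + 8 * C j ^ 3 := by
  rw [map_add, map_mul, map_pow, map_ofNat, map_one]

variable {j : ℂ} (hj2 : j ^ 3 ≠ -1/8)
include hj2

lemma x2y_mem : (X 0 ^ 2 * X 1 : R3) ∈ hesseIdeal j := by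
  apply mem_of_C_mul (unit_ne hj2)
  rw [show C (1 + 8 * j ^ 3) * (X 0 ^ 2 * X 1 : R3) =
      X 1 * g0 j + (-(2 * C j) * X 2) * g1 j + (4 * C j ^ 2 * X 0) * g2 j by
    rw [g0, g1, g2, C2j, C_unit_eq]; ring]
  exact gen_sum_mem

lemma y2z_mem : (X 1 ^ 2 * X 2 : R3) ∈ hesseIdeal j := by
  apply mem_of_C_mul (unit_ne hj2)
  rw [show C (1 + 8 * j ^ 3) * (X 1 ^ 2 * X 2 : R3) =
      (4 * C j ^ 2 * X 1) * g0 j + X 2 * g1 j + (-(2 * C j) * X 0) * g2 j by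
    rw [g0, g1, g2, C2j, C_unit_eq]; ring]
  exact gen_sum_mem

lemma z2x_mem : (X 2 ^ 2 * X 0 : R3) ∈ hesseIdeal j := by
  apply mem_of_C_mul (unit_ne hj2)
  rw [show C (1 + 8 * j ^ 3) * (X 2 ^ 2 * X 0 : R3) =
      (-(2 * C j) * X 1) * g0 j + (4 * C j ^ 2 * X 2) * g1 j + X 0 * g2 j by
    rw [g0, g1, g2, C2j, C_unit_eq]; ring]
  exact gen_sum_mem

lemma x2z_mem : (X 0 ^ 2 * X 2 : R3) ∈ hesseIdeal j := by
  apply mem_of_C_mul (unit_ne hj2)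
  rw [show C (1 + 8 * j ^ 3) * (X 0 ^ 2 * X 2 : R3) =
      X 2 * g0 j + (4 * C j ^ 2 * X 0) * g1 j + (-(2 * C j) * X 1) * g2 j by
    rw [g0, g1, g2, C2j, C_unit_eq]; ring]
  exact gen_sum_mem

lemma y2x_mem : (X 1 ^ 2 * X 0 : R3) ∈ hesseIdeal j := by
  apply mem_of_C_mul (unit_ne hj2)
  rw [show C (1 + 8 * j ^ 3) * (X 1 ^ 2 * X 0 : R3) =
      (-(2 * C j) * X 2) * g0 j + X 0 * g1 j + (4 * C j ^ 2 * X 1) * g2 j by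
    rw [g0, g1, g2, C2j, C_unit_eq]; ring]
  exact gen_sum_mem

lemma z2y_mem : (X 2 ^ 2 * X 1 : R3) ∈ hesseIdeal j := by
  apply mem_of_C_mul (unit_ne hj2)
  rw [show C (1 + 8 * j ^ 3) * (X 2 ^ 2 * X 1 : R3) =
      (4 * C j ^ 2 * X 2) * g0 j + (-(2 * C j) * X 0) * g1 j + X 1 * g2 j by
    rw [g0, g1, g2, C2j, C_unit_eq]; ring]
  exact gen_sum_mem

lemma x4_mem : (X 0 ^ 4 : R3) ∈ hesseIdeal j := by
  rw [show (X 0 ^ 4 : R3) = X 0 ^ 2 * g0 j - 2 * C j * X 2 * (X 0 ^ 2 * X 1) by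
    rw [g0, C2j]; ring]
  exact sub_mem (Ideal.mul_mem_left _ _ (g0_mem j)) (Ideal.mul_mem_left _ _ (x2y_mem hj2))

lemma y4_mem : (X 1 ^ 4 : R3) ∈ hesseIdeal j := by
  rw [show (X 1 ^ 4 : R3) = X 1 ^ 2 * g1 j - 2 * C j * X 0 * (X 1 ^ 2 * X 2) by
    rw [g1, C2j]; ring]
  exact sub_mem (Ideal.mul_mem_left _ _ (g1_mem j)) (Ideal.mul_mem_left _ _ (y2z_mem hj2))

lemma z4_mem : (X 2 ^ 4 : R3) ∈ hesseIdeal j := by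
  rw [show (X 2 ^ 4 : R3) = X 2 ^ 2 * g2 j - 2 * C j * X 1 * (X 2 ^ 2 * X 0) by
    rw [g2, C2j]; ring]
  exact sub_mem (Ideal.mul_mem_left _ _ (g2_mem j)) (Ideal.mul_mem_left _ _ (z2x_mem hj2))

omit hj2

lemma killer {k : Fin 3 →₀ ℕ} (hk : (monomial k 1 : R3) ∈ hesseIdeal j)
    {m : Fin 3 →₀ ℕ} (hle : k ≤ m) : (monomial m 1 : R3) ∈ hesseIdeal j := by
  rw [show m = k + (m - k) from (add_tsub_cancel_of_le hle).symm, ← one_mul (1:ℂ),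
    ← monomial_mul]
  exact Ideal.mul_mem_right _ _ hk

include hj2

lemma mono4 (m : Fin 3 →₀ ℕ) (hm : 4 ≤ m 0 + m 1 + m 2) :
    (monomial m 1 : R3) ∈ hesseIdeal j := by
  have h210 : (monomial (E 2 1 0) 1 : R3) = X 0 ^ 2 * X 1 := by rw [monomial_E]; simp
  have h201 : (monomial (E 2 0 1) 1 : R3) = X 0 ^ 2 * X 2 := by rw [monomial_E]; simp; try ring
  have h021 : (monomial (E 0 2 1) 1 : R3) = X 1 ^ 2 * X 2 := by rw [monomial_E]; simp
  have h120 : (monomial (E 1 2 0) 1 : R3) = X 1 ^ 2 * X 0 := by rw [monomial_E]; simp; try ring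
  have h102 : (monomial (E 1 0 2) 1 : R3) = X 2 ^ 2 * X 0 := by rw [monomial_E]; simp; try ring
  have h012 : (monomial (E 0 1 2) 1 : R3) = X 2 ^ 2 * X 1 := by rw [monomial_E]; simp; try ring
  have h400 : (monomial (E 4 0 0) 1 : R3) = X 0 ^ 4 := by rw [monomial_E]; simp
  have h040 : (monomial (E 0 4 0) 1 : R3) = X 1 ^ 4 := by rw [monomial_E]; simp
  have h004 : (monomial (E 0 0 4) 1 : R3) = X 2 ^ 4 := by rw [monomial_E]; simp
  have hd : (2 ≤ m 0 ∧ 1 ≤ m 1) ∨ (2 ≤ m 0 ∧ 1 ≤ m 2) ∨ (2 ≤ m 1 ∧ 1 ≤ m 2) ∨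
      (2 ≤ m 1 ∧ 1 ≤ m 0) ∨ (2 ≤ m 2 ∧ 1 ≤ m 0) ∨ (2 ≤ m 2 ∧ 1 ≤ m 1) ∨
      4 ≤ m 0 ∨ 4 ≤ m 1 ∨ 4 ≤ m 2 := by omega
  rcases hd with ⟨h1,h2⟩|⟨h1,h2⟩|⟨h1,h2⟩|⟨h1,h2⟩|⟨h1,h2⟩|⟨h1,h2⟩|h1|h1|h1
  · exact killer (h210 ▸ x2y_mem hj2) (E_le_self _ _ _ _ h1 h2 (by omega))
  · exact killer (h201 ▸ x2z_mem hj2) (E_le_self _ _ _ _ h1 (by omega) h2)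
  · exact killer (h021 ▸ y2z_mem hj2) (E_le_self _ _ _ _ (by omega) h1 h2)
  · exact killer (h120 ▸ y2x_mem hj2) (E_le_self _ _ _ _ h2 h1 (by omega))
  · exact killer (h102 ▸ z2x_mem hj2) (E_le_self _ _ _ _ h2 (by omega) h1)
  · exact killer (h012 ▸ z2y_mem hj2) (E_le_self _ _ _ _ (by omega) h2 h1)
  · exact killer (h400 ▸ x4_mem hj2) (E_le_self _ _ _ _ h1 (by omega) (by omega))
  · exact killer (h040 ▸ y4_mem hj2) (E_le_self _ _ _ _ (by omega) h1 (by omega))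
  · exact killer (h004 ▸ z4_mem hj2) (E_le_self _ _ _ _ (by omega) (by omega) h1)

end
end Aux2
section Aux3
noncomputable section
open Submodule

variable (j : ℂ)

def pq : R3 →ₐ[ℂ] (R3 ⧸ hesseIdeal j) := Ideal.Quotient.mkₐ ℂ (hesseIdeal j)

lemma pq_zero_iff (p : R3) : pq j p = 0 ↔ p ∈ hesseIdeal j := by
  rw [pq, Ideal.Quotient.mkₐ_eq_mk, Ideal.Quotient.eq_zero_iff_mem]

lemma piece_le_span {d : ℕ} {S : Set (R3 ⧸ hesseIdeal j)}
    (h : ∀ m : Fin 3 →₀ ℕ, m 0 + m 1 + m 2 = d →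
      pq j (monomial m 1) ∈ Submodule.span ℂ S) :
    piece (hesseIdeal j) d ≤ Submodule.span ℂ S := by
  rintro x ⟨p, hp, rfl⟩
  have hp' : p.IsHomogeneous d := hp
  show pq j p ∈ _
  rw [p.as_sum, map_sum]
  apply Submodule.sum_mem
  intro m hm
  have hdeg : m 0 + m 1 + m 2 = d := by
    rw [← weight_one]; exact hp' (MvPolynomial.mem_support_iff.mp hm)
  rw [show (monomial m (coeff m p) : R3) = coeff m p • monomial m 1 by
    rw [smul_monomial, smul_eq_mul, mul_one], map_smul]
  exact Submodule.smul_mem _ _ (h m hdeg)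

lemma span_le_piece {d : ℕ} {S : Set (R3 ⧸ hesseIdeal j)}
    (h : ∀ x ∈ S, ∃ m : Fin 3 →₀ ℕ, m.degree = d ∧ pq j (monomial m 1) = x) :
    Submodule.span ℂ S ≤ piece (hesseIdeal j) d := by
  rw [Submodule.span_le]
  intro x hx
  obtain ⟨m, hm, rfl⟩ := h x hx
  exact ⟨monomial m 1, (mem_homogeneousSubmodule _ _).mpr (isHomogeneous_monomial _ hm), rfl⟩

lemma rel0 : pq j (X 0 ^ 2 : R3) = (-(2*j)) • pq j (X 1 * X 2) := by
  have h : pq j (g0 j) = 0 := (pq_zero_iff j _).mpr (g0_mem j)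
  rw [g0, map_add, ← smul_eq_C_mul, map_smul] at h
  rw [eq_neg_of_add_eq_zero_left h, neg_smul]

lemma rel1 : pq j (X 1 ^ 2 : R3) = (-(2*j)) • pq j (X 0 * X 2) := by
  have h : pq j (g1 j) = 0 := (pq_zero_iff j _).mpr (g1_mem j)
  rw [g1, map_add, ← smul_eq_C_mul, map_smul] at h
  rw [eq_neg_of_add_eq_zero_left h, neg_smul]

lemma rel2 : pq j (X 2 ^ 2 : R3) = (-(2*j)) • pq j (X 0 * X 1) := by
  have h : pq j (g2 j) = 0 := (pq_zero_iff j _).mpr (g2_mem j)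
  rw [g2, map_add, ← smul_eq_C_mul, map_smul] at h
  rw [eq_neg_of_add_eq_zero_left h, neg_smul]

lemma relc0 : pq j (X 0 ^ 3 : R3) = (-(2*j)) • pq j (X 0 * X 1 * X 2) := by
  have hmem : (X 0 ^ 3 + C (2*j) * (X 0 * X 1 * X 2) : R3) ∈ hesseIdeal j := by
    rw [show (X 0 ^ 3 + C (2*j) * (X 0 * X 1 * X 2) : R3) = X 0 * g0 j by rw [g0]; ring]
    exact Ideal.mul_mem_left _ _ (g0_mem j)
  have h := (pq_zero_iff j _).mpr hmem
  rw [map_add, ← smul_eq_C_mul, map_smul] at h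
  rw [eq_neg_of_add_eq_zero_left h, neg_smul]

lemma relc1 : pq j (X 1 ^ 3 : R3) = (-(2*j)) • pq j (X 0 * X 1 * X 2) := by
  have hmem : (X 1 ^ 3 + C (2*j) * (X 0 * X 1 * X 2) : R3) ∈ hesseIdeal j := by
    rw [show (X 1 ^ 3 + C (2*j) * (X 0 * X 1 * X 2) : R3) = X 1 * g1 j by rw [g1]; ring]
    exact Ideal.mul_mem_left _ _ (g1_mem j)
  have h := (pq_zero_iff j _).mpr hmem
  rw [map_add, ← smul_eq_C_mul, map_smul] at h
  rw [eq_neg_of_add_eq_zero_left h, neg_smul]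

lemma relc2 : pq j (X 2 ^ 3 : R3) = (-(2*j)) • pq j (X 0 * X 1 * X 2) := by
  have hmem : (X 2 ^ 3 + C (2*j) * (X 0 * X 1 * X 2) : R3) ∈ hesseIdeal j := by
    rw [show (X 2 ^ 3 + C (2*j) * (X 0 * X 1 * X 2) : R3) = X 2 * g2 j by rw [g2]; ring]
    exact Ideal.mul_mem_left _ _ (g2_mem j)
  have h := (pq_zero_iff j _).mpr hmem
  rw [map_add, ← smul_eq_C_mul, map_smul] at h
  rw [eq_neg_of_add_eq_zero_left h, neg_smul]

lemma hp0 : piece (hesseIdeal j) 0 = span ℂ {pq j 1} := by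
  refine le_antisymm (piece_le_span j ?_) (span_le_piece j ?_)
  · intro m hm
    rw [show m = E (m 0) (m 1) (m 2) from E_self m,
      show m 0 = 0 by omega, show m 1 = 0 by omega, show m 2 = 0 by omega, monomial_E,
      show (C 1 * X 0 ^ 0 * X 1 ^ 0 * X 2 ^ 0 : R3) = 1 by simp]
    exact subset_span (Set.mem_singleton _)
  · rintro x rfl
    exact ⟨E 0 0 0, by rw [mdeg]; simp [E_apply0, E_apply1, E_apply2],
      by rw [monomial_E]; simp⟩ 

lemma hp1 : piece (hesseIdeal j) 1 = span ℂ (Set.range fun i : Fin 3 => pq j (X i)) := by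
  refine le_antisymm (piece_le_span j ?_) (span_le_piece j ?_)
  · intro m hm
    rw [show m = E (m 0) (m 1) (m 2) from E_self m]
    have h : (m 0 = 1 ∧ m 1 = 0 ∧ m 2 = 0) ∨ (m 0 = 0 ∧ m 1 = 1 ∧ m 2 = 0) ∨
        (m 0 = 0 ∧ m 1 = 0 ∧ m 2 = 1) := by omega
    rcases h with ⟨h0,h1,h2⟩|⟨h0,h1,h2⟩|⟨h0,h1,h2⟩ <;> rw [h0,h1,h2, monomial_E]
    · rw [show (C 1 * X 0 ^ 1 * X 1 ^ 0 * X 2 ^ 0 : R3) = X 0 by simp]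
      exact subset_span ⟨0, rfl⟩
    · rw [show (C 1 * X 0 ^ 0 * X 1 ^ 1 * X 2 ^ 0 : R3) = X 1 by simp]
      exact subset_span ⟨1, rfl⟩
    · rw [show (C 1 * X 0 ^ 0 * X 1 ^ 0 * X 2 ^ 1 : R3) = X 2 by simp]
      exact subset_span ⟨2, rfl⟩
  · rintro x ⟨i, rfl⟩
    fin_cases i
    · exact ⟨E 1 0 0, by rw [mdeg]; simp [E_apply0, E_apply1, E_apply2],
        by rw [monomial_E]; simp⟩
    · exact ⟨E 0 1 0, by rw [mdeg]; simp [E_apply0, E_apply1, E_apply2],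
        by rw [monomial_E]; simp⟩
    · exact ⟨E 0 0 1, by rw [mdeg]; simp [E_apply0, E_apply1, E_apply2],
        by rw [monomial_E]; simp⟩


lemma hp2 : piece (hesseIdeal j) 2 =
    span ℂ (Set.range ![pq j (X 0 * X 1), pq j (X 0 * X 2), pq j (X 1 * X 2)]) := by
  refine le_antisymm (piece_le_span j ?_) (span_le_piece j ?_)
  · intro m hm
    rw [show m = E (m 0) (m 1) (m 2) from E_self m]
    have h : (m 0 = 2 ∧ m 1 = 0 ∧ m 2 = 0) ∨ (m 0 = 0 ∧ m 1 = 2 ∧ m 2 = 0) ∨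
        (m 0 = 0 ∧ m 1 = 0 ∧ m 2 = 2) ∨ (m 0 = 1 ∧ m 1 = 1 ∧ m 2 = 0) ∨
        (m 0 = 1 ∧ m 1 = 0 ∧ m 2 = 1) ∨ (m 0 = 0 ∧ m 1 = 1 ∧ m 2 = 1) := by omega
    rcases h with ⟨h0,h1,h2⟩|⟨h0,h1,h2⟩|⟨h0,h1,h2⟩|⟨h0,h1,h2⟩|⟨h0,h1,h2⟩|⟨h0,h1,h2⟩ <;>
      rw [h0,h1,h2, monomial_E]
    · rw [show (C 1 * X 0 ^ 2 * X 1 ^ 0 * X 2 ^ 0 : R3) = X 0 ^ 2 by rw [C_1]; ring, rel0]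
      exact smul_mem _ _ (subset_span ⟨2, rfl⟩)
    · rw [show (C 1 * X 0 ^ 0 * X 1 ^ 2 * X 2 ^ 0 : R3) = X 1 ^ 2 by rw [C_1]; ring, rel1]
      exact smul_mem _ _ (subset_span ⟨1, rfl⟩)
    · rw [show (C 1 * X 0 ^ 0 * X 1 ^ 0 * X 2 ^ 2 : R3) = X 2 ^ 2 by rw [C_1]; ring, rel2]
      exact smul_mem _ _ (subset_span ⟨0, rfl⟩)
    · rw [show (C 1 * X 0 ^ 1 * X 1 ^ 1 * X 2 ^ 0 : R3) = X 0 * X 1 by rw [C_1]; ring]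
      exact subset_span ⟨0, rfl⟩
    · rw [show (C 1 * X 0 ^ 1 * X 1 ^ 0 * X 2 ^ 1 : R3) = X 0 * X 2 by rw [C_1]; ring]
      exact subset_span ⟨1, rfl⟩
    · rw [show (C 1 * X 0 ^ 0 * X 1 ^ 1 * X 2 ^ 1 : R3) = X 1 * X 2 by rw [C_1]; ring]
      exact subset_span ⟨2, rfl⟩
  · rintro x ⟨i, rfl⟩
    fin_cases i
    · refine ⟨E 1 1 0, by rw [mdeg]; simp [E_apply0, E_apply1, E_apply2], ?_⟩
      show pq j _ = pq j (X 0 * X 1)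
      exact congrArg _ (by rw [monomial_E, C_1]; ring)
    · refine ⟨E 1 0 1, by rw [mdeg]; simp [E_apply0, E_apply1, E_apply2], ?_⟩
      show pq j _ = pq j (X 0 * X 2)
      exact congrArg _ (by rw [monomial_E, C_1]; ring)
    · refine ⟨E 0 1 1, by rw [mdeg]; simp [E_apply0, E_apply1, E_apply2], ?_⟩
      show pq j _ = pq j (X 1 * X 2)
      exact congrArg _ (by rw [monomial_E, C_1]; ring)


lemma hp3 {j : ℂ} (hj2 : j ^ 3 ≠ -1/8) :
    piece (hesseIdeal j) 3 = span ℂ {pq j (X 0 * X 1 * X 2)} := by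
  refine le_antisymm (piece_le_span j ?_) (span_le_piece j ?_)
  · intro m hm
    rw [show m = E (m 0) (m 1) (m 2) from E_self m]
    rcases (show m 0 = 0 ∨ m 0 = 1 ∨ m 0 = 2 ∨ m 0 = 3 by omega) with h0|h0|h0|h0
    · rcases (show (m 1 = 0 ∧ m 2 = 3) ∨ (m 1 = 1 ∧ m 2 = 2) ∨ (m 1 = 2 ∧ m 2 = 1) ∨
          (m 1 = 3 ∧ m 2 = 0) by omega) with ⟨h1,h2⟩|⟨h1,h2⟩|⟨h1,h2⟩|⟨h1,h2⟩ <;>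
        rw [h0,h1,h2,monomial_E]
      · rw [show (C 1 * X 0 ^ 0 * X 1 ^ 0 * X 2 ^ 3 : R3) = X 2 ^ 3 by rw [C_1]; ring, relc2]
        exact smul_mem _ _ (subset_span (Set.mem_singleton _))
      · rw [show (C 1 * X 0 ^ 0 * X 1 ^ 1 * X 2 ^ 2 : R3) = X 2 ^ 2 * X 1 by rw [C_1]; ring,
          (pq_zero_iff j _).mpr (z2y_mem hj2)]
        exact zero_mem _
      · rw [show (C 1 * X 0 ^ 0 * X 1 ^ 2 * X 2 ^ 1 : R3) = X 1 ^ 2 * X 2 by rw [C_1]; ring,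
          (pq_zero_iff j _).mpr (y2z_mem hj2)]
        exact zero_mem _
      · rw [show (C 1 * X 0 ^ 0 * X 1 ^ 3 * X 2 ^ 0 : R3) = X 1 ^ 3 by rw [C_1]; ring, relc1]
        exact smul_mem _ _ (subset_span (Set.mem_singleton _))
    · rcases (show (m 1 = 0 ∧ m 2 = 2) ∨ (m 1 = 1 ∧ m 2 = 1) ∨ (m 1 = 2 ∧ m 2 = 0) by omega)
        with ⟨h1,h2⟩|⟨h1,h2⟩|⟨h1,h2⟩ <;> rw [h0,h1,h2,monomial_E]
      · rw [show (C 1 * X 0 ^ 1 * X 1 ^ 0 * X 2 ^ 2 : R3) = X 2 ^ 2 * X 0 by rw [C_1]; ring,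
          (pq_zero_iff j _).mpr (z2x_mem hj2)]
        exact zero_mem _
      · rw [show (C 1 * X 0 ^ 1 * X 1 ^ 1 * X 2 ^ 1 : R3) = X 0 * X 1 * X 2 by rw [C_1]; ring]
        exact subset_span (Set.mem_singleton _)
      · rw [show (C 1 * X 0 ^ 1 * X 1 ^ 2 * X 2 ^ 0 : R3) = X 1 ^ 2 * X 0 by rw [C_1]; ring,
          (pq_zero_iff j _).mpr (y2x_mem hj2)]
        exact zero_mem _
    · rcases (show (m 1 = 0 ∧ m 2 = 1) ∨ (m 1 = 1 ∧ m 2 = 0) by omega)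
        with ⟨h1,h2⟩|⟨h1,h2⟩ <;> rw [h0,h1,h2,monomial_E]
      · rw [show (C 1 * X 0 ^ 2 * X 1 ^ 0 * X 2 ^ 1 : R3) = X 0 ^ 2 * X 2 by rw [C_1]; ring,
          (pq_zero_iff j _).mpr (x2z_mem hj2)]
        exact zero_mem _
      · rw [show (C 1 * X 0 ^ 2 * X 1 ^ 1 * X 2 ^ 0 : R3) = X 0 ^ 2 * X 1 by rw [C_1]; ring,
          (pq_zero_iff j _).mpr (x2y_mem hj2)]
        exact zero_mem _
    · rw [h0, show m 1 = 0 by omega, show m 2 = 0 by omega, monomial_E,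
        show (C 1 * X 0 ^ 3 * X 1 ^ 0 * X 2 ^ 0 : R3) = X 0 ^ 3 by rw [C_1]; ring, relc0]
      exact smul_mem _ _ (subset_span (Set.mem_singleton _))
  · rintro x rfl
    exact ⟨E 1 1 1, by rw [mdeg]; simp [E_apply0, E_apply1, E_apply2],
      by rw [monomial_E, C_1]; ring⟩

lemma hp4 {j : ℂ} (hj2 : j ^ 3 ≠ -1/8) {d : ℕ} (hd : 4 ≤ d) :
    piece (hesseIdeal j) d = ⊥ := by
  rw [eq_bot_iff, ← Submodule.span_empty (R := ℂ)]
  apply piece_le_span j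
  intro m hm
  rw [(pq_zero_iff j _).mpr (mono4 hj2 m (by omega))]
  exact zero_mem _

end
end Aux3

section Aux4
noncomputable section
open Submodule

variable (j : ℂ)

lemma Phi_xyz : Phi j (X 0 * X 1 * X 2 : R3) = 1 := by
  rw [show (X 0 * X 1 * X 2 : R3) = monomial (E 1 1 1) 1 by rw [monomial_E, C_1]; ring,
    Phi_monomial]
  norm_num

variable (a b c : ℂ)

lemma Phi_lin1 : Phi j ((X 1 * X 2) * (a • X 0 + b • X 1 + c • X 2) : R3) = a := by
  rw [show ((X 1 * X 2) * (a • X 0 + b • X 1 + c • X 2) : R3)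
      = monomial (E 1 1 1) a + (monomial (E 0 2 1) b + monomial (E 0 1 2) c) by
    rw [monomial_E, monomial_E, monomial_E, smul_eq_C_mul, smul_eq_C_mul, smul_eq_C_mul]; ring,
    Phi_add, Phi_add, Phi_monomial, Phi_monomial, Phi_monomial]
  norm_num

lemma Phi_lin2 : Phi j ((X 0 * X 2) * (a • X 0 + b • X 1 + c • X 2) : R3) = b := by
  rw [show ((X 0 * X 2) * (a • X 0 + b • X 1 + c • X 2) : R3)
      = monomial (E 2 0 1) a + (monomial (E 1 1 1) b + monomial (E 1 0 2) c) by
    rw [monomial_E, monomial_E, monomial_E, smul_eq_C_mul, smul_eq_C_mul, smul_eq_C_mul]; ring,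
    Phi_add, Phi_add, Phi_monomial, Phi_monomial, Phi_monomial]
  norm_num

lemma Phi_lin3 : Phi j ((X 0 * X 1) * (a • X 0 + b • X 1 + c • X 2) : R3) = c := by
  rw [show ((X 0 * X 1) * (a • X 0 + b • X 1 + c • X 2) : R3)
      = monomial (E 2 1 0) a + (monomial (E 1 2 0) b + monomial (E 1 1 1) c) by
    rw [monomial_E, monomial_E, monomial_E, smul_eq_C_mul, smul_eq_C_mul, smul_eq_C_mul]; ring,
    Phi_add, Phi_add, Phi_monomial, Phi_monomial, Phi_monomial]
  norm_num

lemma Phi_quad1 :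
    Phi j (X 2 * (a • (X 0 * X 1) + b • (X 0 * X 2) + c • (X 1 * X 2)) : R3) = a := by
  rw [show (X 2 * (a • (X 0 * X 1) + b • (X 0 * X 2) + c • (X 1 * X 2)) : R3)
      = monomial (E 1 1 1) a + (monomial (E 1 0 2) b + monomial (E 0 1 2) c) by
    rw [monomial_E, monomial_E, monomial_E, smul_eq_C_mul, smul_eq_C_mul, smul_eq_C_mul]; ring,
    Phi_add, Phi_add, Phi_monomial, Phi_monomial, Phi_monomial]
  norm_num

lemma Phi_quad2 :
    Phi j (X 1 * (a • (X 0 * X 1) + b • (X 0 * X 2) + c • (X 1 * X 2)) : R3) = b := by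
  rw [show (X 1 * (a • (X 0 * X 1) + b • (X 0 * X 2) + c • (X 1 * X 2)) : R3)
      = monomial (E 1 2 0) a + (monomial (E 1 1 1) b + monomial (E 0 2 1) c) by
    rw [monomial_E, monomial_E, monomial_E, smul_eq_C_mul, smul_eq_C_mul, smul_eq_C_mul]; ring,
    Phi_add, Phi_add, Phi_monomial, Phi_monomial, Phi_monomial]
  norm_num

lemma Phi_quad3 :
    Phi j (X 0 * (a • (X 0 * X 1) + b • (X 0 * X 2) + c • (X 1 * X 2)) : R3) = c := by
  rw [show (X 0 * (a • (X 0 * X 1) + b • (X 0 * X 2) + c • (X 1 * X 2)) : R3)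
      = monomial (E 2 1 0) a + (monomial (E 2 0 1) b + monomial (E 1 1 1) c) by
    rw [monomial_E, monomial_E, monomial_E, smul_eq_C_mul, smul_eq_C_mul, smul_eq_C_mul]; ring,
    Phi_add, Phi_add, Phi_monomial, Phi_monomial, Phi_monomial]
  norm_num

lemma pq_xyz_ne : pq j (X 0 * X 1 * X 2 : R3) ≠ 0 := by
  intro h
  rw [pq_zero_iff] at h
  have := Phi_ideal h
  rw [Phi_xyz] at this
  exact one_ne_zero this

lemma pq_one_ne : pq j (1 : R3) ≠ 0 := by
  intro h
  rw [pq_zero_iff] at h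
  have hx : (X 0 * X 1 * X 2 : R3) ∈ hesseIdeal j := by
    simpa using (hesseIdeal j).mul_mem_left (X 0 * X 1 * X 2) h
  have := Phi_ideal hx
  rw [Phi_xyz] at this
  exact one_ne_zero this

lemma li1 : LinearIndependent ℂ (fun i : Fin 3 => pq j (X i)) := by
  rw [Fintype.linearIndependent_iff]
  intro g hg
  rw [Fin.sum_univ_three] at hg
  have hw : (g 0 • X 0 + g 1 • X 1 + g 2 • X 2 : R3) ∈ hesseIdeal j := by
    rw [← pq_zero_iff, map_add, map_add, map_smul, map_smul, map_smul]
    exact hg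
  intro i
  fin_cases i
  · have h := Phi_ideal ((hesseIdeal j).mul_mem_left (X 1 * X 2) hw)
    rw [Phi_lin1] at h
    exact h
  · have h := Phi_ideal ((hesseIdeal j).mul_mem_left (X 0 * X 2) hw)
    rw [Phi_lin2] at h
    exact h
  · have h := Phi_ideal ((hesseIdeal j).mul_mem_left (X 0 * X 1) hw)
    rw [Phi_lin3] at h
    exact h

lemma li2 : LinearIndependent ℂ ![pq j (X 0 * X 1), pq j (X 0 * X 2), pq j (X 1 * X 2)] := by
  rw [Fintype.linearIndependent_iff]
  intro g hg
  rw [Fin.sum_univ_three] at hg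
  simp only [Matrix.cons_val_zero, Matrix.cons_val_one, Matrix.head_cons,
    Matrix.cons_val_two, Matrix.tail_cons] at hg
  have hw : (g 0 • (X 0 * X 1) + g 1 • (X 0 * X 2) + g 2 • (X 1 * X 2) : R3) ∈ hesseIdeal j := by
    rw [← pq_zero_iff, map_add, map_add, map_smul, map_smul, map_smul]
    exact hg
  intro i
  fin_cases i
  · have h := Phi_ideal ((hesseIdeal j).mul_mem_left (X 2) hw)
    rw [Phi_quad1] at h
    exact h
  · have h := Phi_ideal ((hesseIdeal j).mul_mem_left (X 1) hw)
    rw [Phi_quad2] at h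
    exact h
  · have h := Phi_ideal ((hesseIdeal j).mul_mem_left (X 0) hw)
    rw [Phi_quad3] at h
    exact h

def bigS : Set (R3 ⧸ hesseIdeal j) :=
  {pq j 1} ∪ Set.range (fun i : Fin 3 => pq j (X i)) ∪
    Set.range ![pq j (X 0 * X 1), pq j (X 0 * X 2), pq j (X 1 * X 2)] ∪ {pq j (X 0 * X 1 * X 2)}

lemma bigS_finite : (bigS j).Finite :=
  (((Set.finite_singleton _).union (Set.finite_range _)).union (Set.finite_range _)).union
    (Set.finite_singleton _)

lemma top_le_bigS {j : ℂ} (hj2 : j ^ 3 ≠ -1/8) :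
    (⊤ : Submodule ℂ (R3 ⧸ hesseIdeal j)) ≤ span ℂ (bigS j) := by
  have hmono : ∀ m : Fin 3 →₀ ℕ, pq j (monomial m 1) ∈ span ℂ (bigS j) := by
    intro m
    by_cases h4 : 4 ≤ m 0 + m 1 + m 2
    · rw [(pq_zero_iff j _).mpr (mono4 hj2 m h4)]
      exact zero_mem _
    · have hp : pq j (monomial m 1) ∈ piece (hesseIdeal j) (m 0 + m 1 + m 2) :=
        ⟨monomial m 1,
          (mem_homogeneousSubmodule _ _).mpr (isHomogeneous_monomial _ (mdeg m)), rfl⟩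
      have hd3 : m 0 + m 1 + m 2 ≤ 3 := by omega
      interval_cases hd : (m 0 + m 1 + m 2)
      · rw [hp0 j] at hp
        exact span_mono (fun x hx => by left; left; left; exact hx) hp
      · rw [hp1 j] at hp
        exact span_mono (fun x hx => by left; left; right; exact hx) hp
      · rw [hp2 j] at hp
        exact span_mono (fun x hx => by left; right; exact hx) hp
      · rw [hp3 hj2] at hp
        exact span_mono (fun x hx => by right; exact hx) hp
  intro x _
  obtain ⟨p, hpp⟩ := Ideal.Quotient.mk_surjective x
  have hx : pq j p = x := by rw [pq, Ideal.Quotient.mkₐ_eq_mk]; exact hpp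
  rw [← hx, p.as_sum, map_sum]
  apply Submodule.sum_mem
  intro m _
  rw [show (monomial m (coeff m p) : R3) = coeff m p • monomial m 1 by
    rw [smul_monomial, smul_eq_mul, mul_one], map_smul]
  exact Submodule.smul_mem _ _ (hmono m)

lemma finiteQ {j : ℂ} (hj2 : j ^ 3 ≠ -1/8) : Module.Finite ℂ (R3 ⧸ hesseIdeal j) := by
  rw [Module.finite_def, Submodule.fg_def]
  exact ⟨bigS j, bigS_finite j, eq_top_iff.mpr (top_le_bigS hj2)⟩

end
end Aux4

theorem stmt10 (j : ℂ) (hj0 : j ^ 3 ≠ 0) (hj1 : j ^ 3 ≠ 1) (hj2 : j ^ 3 ≠ -1/8) :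
    IsArtinianRing (MvPolynomial (Fin 3) ℂ ⧸ hesseIdeal j) ∧
    Module.finrank ℂ (piece (hesseIdeal j) 0) = 1 ∧
    Module.finrank ℂ (piece (hesseIdeal j) 1) = 3 ∧
    Module.finrank ℂ (piece (hesseIdeal j) 2) = 3 ∧
    Module.finrank ℂ (piece (hesseIdeal j) 3) = 1 ∧
    ∀ i, 4 ≤ i → piece (hesseIdeal j) i = ⊥ := by
  have hfin : Module.Finite ℂ (R3 ⧸ hesseIdeal j) := finiteQ hj2
  refine ⟨IsArtinianRing.of_finite ℂ _, ?_, ?_, ?_, ?_, fun i hi => hp4 hj2 hi⟩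
  · rw [hp0 j]
    exact finrank_span_singleton (pq_one_ne j)
  · rw [hp1 j]
    rw [finrank_span_eq_card (li1 j)]
    simp
  · rw [hp2 j]
    rw [finrank_span_eq_card (li2 j)]
    simp
  · rw [hp3 hj2]
    exact finrank_span_singleton (pq_xyz_ne j)
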